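/- Let p = 2n+1 ≥ 7 be prime. Then the matrix B_p(n-1) = [(s_i+s_j)^{n-1}]_{2≤i,j≤n} over F_p is singular if and only if Q_p ≡ 2 (mod p²). -/

import Mathlib

/-- The companion Pell sequence: `Q 0 = 2`, `Q 1 = 2`, `Q (i+2) = 2 * Q (i+1) + Q i`. -/
def pellQ : ℕ → ℕ
  | 0 => 2
  | 1 => 2
  | (i + 2) => 2 * pellQ (i + 1) + pellQ i

open Finset Matrix

lemma choose_p_sub_one (p : ℕ) [hp : Fact p.Prime] {j : ℕ} (hj : j ≤ p - 1) :
    ((Nat.choose (p - 1) j : ℕ) : ZMod p) = (-1) ^ j := by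
  induction j with
  | zero => simp
  | succ i ih =>
    have hi : i ≤ p - 1 := le_of_lt (Nat.lt_of_lt_of_le (Nat.lt_succ_self i) hj)
    have key := Nat.choose_succ_right_eq (p - 1) i
    have hcast : (((p - 1 - i : ℕ) : ZMod p)) = -((i : ZMod p) + 1) := by
      have h2 : (p - 1 - i : ℕ) + (i + 1) = p := by omega
      have h3 := congrArg (fun x : ℕ => (x : ZMod p)) h2
      push_cast at h3
      rw [ZMod.natCast_self] at h3
      linear_combination h3
    have hiu : ((i : ZMod p) + 1) ≠ 0 := by
      have : ((i+1 : ℕ) : ZMod p) ≠ 0 := by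
        rw [Ne, ZMod.natCast_eq_zero_iff]
        intro hdvd
        have := Nat.le_of_dvd (Nat.succ_pos i) hdvd
        omega
      push_cast at this; exact this
    have key2 := congrArg (fun x : ℕ => (x : ZMod p)) key
    push_cast at key2
    rw [hcast, ih hi] at key2
    apply mul_right_cancel₀ hiu
    rw [key2]; ring

def auxA (j : ℕ) : ℕ := ∑ k ∈ range (j+1), (Nat.factorial k) * (Nat.factorial (j - k))

lemma auxA_rec (j : ℕ) : 2 * auxA (j+1) = (j+2) * auxA j + 2 * Nat.factorial (j+1) := by
  have h1 : auxA (j+1) = (∑ k ∈ range (j+1), Nat.factorial k * Nat.factorial (j+1-k))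
      + Nat.factorial (j+1) := by
    rw [auxA, sum_range_succ]; simp
  have h2 : auxA (j+1) = (∑ k ∈ range (j+1), Nat.factorial (k+1) * Nat.factorial (j-k))
      + Nat.factorial (j+1) := by
    rw [auxA, sum_range_succ']
    congr 1
    · apply sum_congr rfl; intro k hk; congr 2; omega
    · simp
  have h3 : (∑ k ∈ range (j+1), Nat.factorial k * Nat.factorial (j+1-k))
      + (∑ k ∈ range (j+1), Nat.factorial (k+1) * Nat.factorial (j-k))
      = (j+2) * auxA j := by
    rw [auxA, mul_sum, ← sum_add_distrib]
    apply sum_congr rfl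
    intro k hk
    rw [mem_range] at hk
    have hk' : k ≤ j := by omega
    obtain ⟨d, rfl⟩ : ∃ d, j = k + d := ⟨j - k, by omega⟩
    have e1 : k + d + 1 - k = d + 1 := by omega
    have e2 : k + d - k = d := by omega
    rw [e1, e2, Nat.factorial_succ, Nat.factorial_succ]
    ring
  omega

lemma cast_ne_zero_of_lt {p : ℕ} [Fact p.Prime] {a : ℕ} (h0 : 0 < a) (h : a < p) :
    ((a : ZMod p)) ≠ 0 := by
  rw [Ne, ZMod.natCast_eq_zero_iff]
  intro hd; have := Nat.le_of_dvd h0 hd; omega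

lemma fact_cast_ne_zero {p : ℕ} [hp : Fact p.Prime] {j : ℕ} (h : j < p) :
    ((Nat.factorial j : ℕ) : ZMod p) ≠ 0 := by
  rw [Ne, ZMod.natCast_eq_zero_iff]
  intro hd
  have := (Nat.Prime.dvd_factorial hp.out).mp hd
  omega

lemma F_eq (p : ℕ) [hp : Fact p.Prime] (j : ℕ) (hj : j + 2 < p) :
    (auxA j : ZMod p) * ((Nat.factorial j : ℕ) : ZMod p)⁻¹
      = ((j:ZMod p)+1) * ((2:ZMod p)^(j+1))⁻¹ *
        ∑ i ∈ range (j+1), 2^(i+1) * ((i+1 : ℕ) : ZMod p)⁻¹ := by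
  induction j with
  | zero =>
    have h2 : (2 : ZMod p) ≠ 0 := by
      have : ((2:ℕ) : ZMod p) ≠ 0 := cast_ne_zero_of_lt (by norm_num) (by omega)
      simpa using this
    simp [auxA]
    field_simp
  | succ j ih =>
    have ihj := ih (by omega)
    have h2 : (2 : ZMod p) ≠ 0 := by
      have : ((2:ℕ) : ZMod p) ≠ 0 := cast_ne_zero_of_lt (by norm_num) (by omega)
      simpa using this
    have hj1 : ((j:ZMod p) + 1) ≠ 0 := by
      have : ((j+1 : ℕ) : ZMod p) ≠ 0 := cast_ne_zero_of_lt (by omega) (by omega)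
      push_cast at this; exact this
    have hj2 : ((j:ZMod p) + 2) ≠ 0 := by
      have : ((j+2 : ℕ) : ZMod p) ≠ 0 := cast_ne_zero_of_lt (by omega) (by omega)
      push_cast at this; exact this
    have hfj : ((Nat.factorial j : ℕ) : ZMod p) ≠ 0 := fact_cast_ne_zero (by omega)
    have hrec := congrArg (fun x : ℕ => (x : ZMod p)) (auxA_rec j)
    push_cast at hrec
    have hfs : ((Nat.factorial (j+1) : ℕ) : ZMod p) = ((j:ZMod p)+1) * ((Nat.factorial j : ℕ) : ZMod p) := by
      rw [Nat.factorial_succ]; push_cast; ring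
    set S := ∑ i ∈ range (j+1), (2:ZMod p)^(i+1) * ((i+1 : ℕ) : ZMod p)⁻¹ with hSdef
    rw [hfs] at hrec
    have ih' : (auxA j : ZMod p) * 2^(j+1) = ((j:ZMod p)+1) * S * ((Nat.factorial j : ℕ) : ZMod p) := by
      field_simp at ihj
      linear_combination ihj
    have key : (auxA (j+1) : ZMod p) * 2^(j+2) * ((j:ZMod p)+2)
        = ((j:ZMod p)+2) * (S * ((j:ZMod p)+2) + 2^(j+2)) * (((j:ZMod p)+1) * ((Nat.factorial j : ℕ) : ZMod p)) := by
      linear_combination (2^(j+1)*((j:ZMod p)+2)) * hrec + (((j:ZMod p)+2)^2) * ih'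
    rw [sum_range_succ, ← hSdef]
    have e1 : ((j+1:ℕ) : ZMod p) = (j:ZMod p)+1 := by push_cast; ring
    have e2 : ((j+1+1:ℕ) : ZMod p) = (j:ZMod p)+2 := by push_cast; ring
    rw [hfs, e1, e2]
    have hU : (((j:ZMod p)+1) * ((Nat.factorial j:ℕ) : ZMod p)) * ((2:ZMod p)^(j+2) * ((j:ZMod p)+2)) ≠ 0 :=
      mul_ne_zero (mul_ne_zero hj1 hfj) (mul_ne_zero (pow_ne_zero _ h2) hj2)
    refine mul_right_cancel₀ hU ?_
    have hc1 : (((j:ZMod p)+1) * ((Nat.factorial j:ℕ) : ZMod p))⁻¹ * (((j:ZMod p)+1) * ((Nat.factorial j:ℕ) : ZMod p)) = 1 :=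
      inv_mul_cancel₀ (mul_ne_zero hj1 hfj)
    have hc2 : ((2:ZMod p)^(j+2))⁻¹ * (2:ZMod p)^(j+2) = 1 := inv_mul_cancel₀ (pow_ne_zero _ h2)
    have hc3 : ((j:ZMod p)+2)⁻¹ * ((j:ZMod p)+2) = 1 := inv_mul_cancel₀ hj2
    have e3 : (2:ZMod p)^(j+1+1) = 2^(j+2) := by norm_num
    rw [e3]
    linear_combination key + (((auxA (j+1) : ℕ) : ZMod p) * 2^(j+2) * ((j:ZMod p)+2)) * hc1
      - ((((j:ZMod p)+2)^2 * (((j:ZMod p)+1) * ((Nat.factorial j:ℕ) : ZMod p)) * S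
          + ((j:ZMod p)+2)^2 * (((j:ZMod p)+2)⁻¹) * (((j:ZMod p)+1) * ((Nat.factorial j:ℕ) : ZMod p)) * 2^(j+2))) * hc2
      - (((j:ZMod p)+2) * (((j:ZMod p)+1) * ((Nat.factorial j:ℕ) : ZMod p)) * 2^(j+2)) * hc3

def qq (i : ℕ) : ℕ := ∑ k ∈ range (i+1), Nat.choose i (2*k) * 2^k
def rr (i : ℕ) : ℕ := ∑ k ∈ range (i+1), Nat.choose i (2*k+1) * 2^k

lemma qq_succ (i : ℕ) : qq (i+1) = qq i + 2 * rr i := by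
  have h1 : qq (i+1) = (∑ k ∈ range (i+1), Nat.choose (i+1) (2*(k+1)) * 2^(k+1)) + 1 := by
    rw [qq, sum_range_succ']; simp
  have h2 : ∀ k, Nat.choose (i+1) (2*(k+1)) = Nat.choose i (2*k+1) + Nat.choose i (2*(k+1)) := by
    intro k
    have : 2*(k+1) = (2*k+1) + 1 := by ring
    rw [this, Nat.choose_succ_succ']
  have h3 : qq i = (∑ k ∈ range i, Nat.choose i (2*(k+1)) * 2^(k+1)) + 1 := by
    rw [qq, sum_range_succ']; simp
  have h4 : (∑ k ∈ range (i+1), Nat.choose i (2*(k+1)) * 2^(k+1))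
      = ∑ k ∈ range i, Nat.choose i (2*(k+1)) * 2^(k+1) := by
    rw [sum_range_succ, Nat.choose_eq_zero_of_lt (by omega), zero_mul, add_zero]
  have h5 : qq (i+1) = (∑ k ∈ range (i+1), Nat.choose i (2*k+1) * 2^(k+1))
      + (∑ k ∈ range (i+1), Nat.choose i (2*(k+1)) * 2^(k+1)) + 1 := by
    rw [h1]; congr 1
    rw [← sum_add_distrib]
    apply sum_congr rfl
    intro k _
    rw [h2 k, add_mul]
  have h6 : (∑ k ∈ range (i+1), Nat.choose i (2*k+1) * 2^(k+1)) = 2 * rr i := by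
    rw [rr, mul_sum]
    apply sum_congr rfl
    intro k _
    rw [pow_succ]; ring
  omega
lemma rr_succ (i : ℕ) : rr (i+1) = qq i + rr i := by
  have h2 : ∀ k, Nat.choose (i+1) (2*k+1) = Nat.choose i (2*k) + Nat.choose i (2*k+1) := by
    intro k; rw [Nat.choose_succ_succ']
  have h5 : rr (i+1) = (∑ k ∈ range (i+2), Nat.choose i (2*k) * 2^k)
      + (∑ k ∈ range (i+2), Nat.choose i (2*k+1) * 2^k) := by
    rw [rr, ← sum_add_distrib]
    apply sum_congr rfl
    intro k _
    rw [h2 k, add_mul]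
  have h6 : (∑ k ∈ range (i+2), Nat.choose i (2*k) * 2^k) = qq i := by
    rw [qq, sum_range_succ, Nat.choose_eq_zero_of_lt (by omega)]
    simp
  have h7 : (∑ k ∈ range (i+2), Nat.choose i (2*k+1) * 2^k) = rr i := by
    rw [rr, sum_range_succ, Nat.choose_eq_zero_of_lt (by omega)]
    simp
  omega

lemma pellQ_eq (i : ℕ) : pellQ i = 2 * qq i := by
  have key : ∀ j, pellQ j = 2 * qq j ∧ pellQ (j+1) = 2 * qq (j+1) := by
    intro j
    induction j with
    | zero =>
      constructor
      · show pellQ 0 = _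
        rw [show pellQ 0 = 2 from rfl, qq]
        norm_num
      · rw [show pellQ 1 = 2 from rfl, qq]
        rw [sum_range_succ, sum_range_one]
        norm_num
    | succ j ih =>
      refine ⟨ih.2, ?_⟩
      have hp : pellQ (j+1+1) = 2 * pellQ (j+1) + pellQ j := rfl
      have hq := qq_succ (j+1)
      have hr := rr_succ j
      have hq0 := qq_succ j
      omega
  exact (key i).1

lemma pell_cond (p n : ℕ) [hp : Fact p.Prime] (hpn : p = 2*n+1) (h7 : 7 ≤ p) :
    ((pellQ p : ℤ) ≡ 2 [ZMOD (p:ℤ)^2]) ↔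
      (∑ i ∈ range n, (2:ZMod p)^(i+1) * ((i+1:ℕ) : ZMod p)⁻¹) = 0 := by
  have hn3 : 3 ≤ n := by omega
  -- qq p = 1 + p * T
  have hdvd : ∀ k, k < n → p ∣ Nat.choose p (2*k+2) :=
    fun k hk => hp.out.dvd_choose_self (by omega) (by omega)
  set T : ℕ := ∑ k ∈ range n, (Nat.choose p (2*k+2) / p) * 2^(k+1) with hT
  have hqq : qq p = 1 + p * T := by
    have h1 : qq p = (∑ k ∈ range p, Nat.choose p (2*(k+1)) * 2^(k+1)) + 1 := by
      rw [qq, sum_range_succ']; simp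
    have h2 : (∑ k ∈ range p, Nat.choose p (2*(k+1)) * 2^(k+1))
        = ∑ k ∈ range n, Nat.choose p (2*(k+1)) * 2^(k+1) := by
      symm
      apply sum_subset
      · intro x hx; rw [mem_range] at *; omega
      · intro x _ hx
        rw [mem_range] at hx
        rw [Nat.choose_eq_zero_of_lt (by omega), zero_mul]
    have h3 : (∑ k ∈ range n, Nat.choose p (2*(k+1)) * 2^(k+1)) = p * T := by
      rw [hT, mul_sum]
      apply sum_congr rfl
      intro k hk
      rw [mem_range] at hk
      have e : 2*(k+1) = 2*k+2 := by ring
      rw [e, ← mul_assoc p, Nat.mul_div_cancel' (hdvd k hk)]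
    omega
  have hpell : pellQ p = 2 + 2 * p * T := by rw [pellQ_eq, hqq]; ring
  have hp0 : ((p:ℤ)) ≠ 0 := by exact_mod_cast hp.out.pos.ne'
  have hZ : ((pellQ p : ℤ)) = 2 + 2*(p:ℤ)*(T:ℤ) := by exact_mod_cast hpell
  have h2ne : (2 : ZMod p) ≠ 0 := by
    have : ((2:ℕ) : ZMod p) ≠ 0 := cast_ne_zero_of_lt (by norm_num) (by omega)
    simpa using this
  -- T mod p
  have hterm : ∀ k, k < n → ((Nat.choose p (2*k+2) / p : ℕ) : ZMod p)
      = -(((2*k+2:ℕ)) : ZMod p)⁻¹ := by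
    intro k hk
    have hkey : p * Nat.choose (p-1) (2*k+1) = Nat.choose p (2*k+2) * (2*k+2) := by
      have h := Nat.add_one_mul_choose_eq (p-1) (2*k+1)
      have e1 : p - 1 + 1 = p := by omega
      rw [e1] at h
      have e3 : 2*k+1+1 = 2*k+2 := by omega
      rw [e3] at h
      exact h
    have hkey2 : Nat.choose (p-1) (2*k+1) = (Nat.choose p (2*k+2) / p) * (2*k+2) := by
      apply Nat.eq_of_mul_eq_mul_left hp.out.pos
      rw [hkey, ← mul_assoc p, Nat.mul_div_cancel' (hdvd k hk)]
    have hcast := congrArg (fun x : ℕ => (x : ZMod p)) hkey2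
    simp only [Nat.cast_mul] at hcast
    rw [choose_p_sub_one p (by omega)] at hcast
    have hodd : ((-1 : ZMod p)) ^ (2*k+1) = -1 := Odd.neg_one_pow ⟨k, by ring⟩
    rw [hodd] at hcast
    have h2k2 : (((2*k+2:ℕ)) : ZMod p) ≠ 0 := cast_ne_zero_of_lt (by omega) (by omega)
    refine mul_right_cancel₀ h2k2 ?_
    rw [neg_mul, inv_mul_cancel₀ h2k2]
    exact hcast.symm
  have hTcast : ((T:ℕ) : ZMod p)
      = -2⁻¹ * ∑ i ∈ range n, (2:ZMod p)^(i+1) * ((i+1:ℕ) : ZMod p)⁻¹ := by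
    rw [hT, Nat.cast_sum, mul_sum]
    apply sum_congr rfl
    intro k hk
    rw [mem_range] at hk
    rw [Nat.cast_mul, hterm k hk]
    have e : ((2*k+2:ℕ) : ZMod p) = 2 * ((k+1:ℕ) : ZMod p) := by push_cast; ring
    rw [e, mul_inv, Nat.cast_pow]
    push_cast
    ring
  -- chain of iffs
  rw [Int.modEq_iff_dvd, hZ, show (2:ℤ) - (2 + 2*(p:ℤ)*(T:ℤ)) = -(2*(p:ℤ)*(T:ℤ)) by ring,
    dvd_neg, pow_two, show (2:ℤ)*(p:ℤ)*(T:ℤ) = (p:ℤ) * (2*(T:ℤ)) by ring,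
    mul_dvd_mul_iff_left hp0]
  have : ((p:ℤ) ∣ 2*(T:ℤ)) ↔ ((2*T : ℕ) : ZMod p) = 0 := by
    rw [ZMod.natCast_eq_zero_iff]
    constructor
    · intro h; exact_mod_cast h
    · intro h; exact_mod_cast h
  rw [this, Nat.cast_mul, Nat.cast_ofNat, mul_eq_zero]
  constructor
  · rintro (h | h)
    · exact absurd h h2ne
    · rw [hTcast] at h
      rcases mul_eq_zero.mp h with h' | h'
      · exact absurd h' (neg_ne_zero.mpr (inv_ne_zero h2ne))
      · exact h'
  · intro h
    right
    rw [hTcast, h, mul_zero]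

lemma cast_ne_zero_of_lt' {p : ℕ} [Fact p.Prime] {a : ℕ} (h0 : 0 < a) (h : a < p) :
    ((a : ZMod p)) ≠ 0 := by
  rw [Ne, ZMod.natCast_eq_zero_iff]
  intro hd; have := Nat.le_of_dvd h0 hd; omega

lemma det_key (p : ℕ) [hp : Fact p.Prime] (m : ℕ) (hm : 2*(m+1)+1 = p) (hm1 : 1 ≤ m)
    (t : Fin (m+1) → ZMod p) (ht0 : t 0 = 1) (htinj : Function.Injective t)
    (htpow : ∀ a, (t a)^(m+1) = 1) (htne : ∀ a : Fin (m+1), a ≠ 0 → t a ≠ 1) :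
    ((Matrix.of fun i j : Fin m => (t i.succ + t j.succ) ^ m).det = 0
      ↔ (∑ k ∈ range (m+1), (((Nat.choose m k : ℕ) : ZMod p))⁻¹) = 0) := by
  have hchoose : ∀ k : ℕ, ((Nat.choose m k : ℕ) : ZMod p) ≠ 0 ∨ m < k := by
    intro k
    by_cases hk : k ≤ m
    · left
      rw [Ne, ZMod.natCast_eq_zero_iff]
      intro hdvd
      have h1 : p ∣ Nat.factorial m := by
        have := Nat.choose_mul_factorial_mul_factorial hk
        have : p ∣ Nat.choose m k * Nat.factorial k * Nat.factorial (m - k) :=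
          Dvd.dvd.mul_right (Dvd.dvd.mul_right hdvd _) _
        rwa [Nat.choose_mul_factorial_mul_factorial hk] at this
      have := (Nat.Prime.dvd_factorial hp.out).mp h1
      omega
    · right; omega
  have hchoose' : ∀ k : ℕ, k ≤ m → ((Nat.choose m k : ℕ) : ZMod p) ≠ 0 := by
    intro k hk
    rcases hchoose k with h | h
    · exact h
    · omega
  have hcond : ∀ (k l : Fin (m+1)), ((k:ℕ) + (l:ℕ) = m) ↔ l = Fin.rev k := by
    intro k l
    rw [Fin.ext_iff, Fin.val_rev]
    have := k.isLt; have := l.isLt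
    omega
  set V : Matrix (Fin (m+1)) (Fin (m+1)) (ZMod p) := Matrix.vandermonde t with hV
  set E : Matrix (Fin (m+1)) (Fin (m+1)) (ZMod p) :=
    Matrix.of (fun k l : Fin (m+1) =>
      if (k:ℕ) + (l:ℕ) = m then ((Nat.choose m (k:ℕ) : ℕ) : ZMod p) else 0) with hE
  set F : Matrix (Fin (m+1)) (Fin (m+1)) (ZMod p) :=
    Matrix.of (fun k l : Fin (m+1) =>
      if (k:ℕ) + (l:ℕ) = m then (((Nat.choose m (k:ℕ) : ℕ) : ZMod p))⁻¹ else 0) with hF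
  set A : Matrix (Fin (m+1)) (Fin (m+1)) (ZMod p) :=
    Matrix.of (fun a b : Fin (m+1) => (t a + t b)^m) with hA
  -- A = V * E * Vᵀ
  have hAVEV : A = V * E * Vᵀ := by
    ext a b
    rw [hA, Matrix.of_apply, Matrix.mul_apply]
    simp only [Matrix.mul_apply, Matrix.transpose_apply, hV, hE, vandermonde, of_apply]
    have : ∀ l : Fin (m+1),
        (∑ k : Fin (m+1), t a ^ (k:ℕ) *
          (if (k:ℕ) + (l:ℕ) = m then ((Nat.choose m (k:ℕ) : ℕ) : ZMod p) else 0)) * t b ^ (l:ℕ)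
        = t a ^ ((Fin.rev l : Fin (m+1)):ℕ) * ((Nat.choose m ((Fin.rev l : Fin (m+1)):ℕ) : ℕ) : ZMod p) * t b ^ (l:ℕ) := by
      intro l
      congr 1
      have hcond2 : ∀ k : Fin (m+1), ((k:ℕ) + (l:ℕ) = m) ↔ k = Fin.rev l := by
        intro k
        rw [Fin.ext_iff, Fin.val_rev]
        have := k.isLt; have := l.isLt
        omega
      simp only [hcond2]
      rw [Finset.sum_congr rfl (fun k _ => by
        rw [show (t a ^ (k:ℕ) * if k = Fin.rev l then ((Nat.choose m (k:ℕ) : ℕ) : ZMod p) else 0)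
          = (if k = Fin.rev l then t a ^ (k:ℕ) * ((Nat.choose m (k:ℕ) : ℕ) : ZMod p) else 0) by
            split <;> simp])]
      rw [Finset.sum_ite_eq' univ (Fin.rev l)]
      simp
    rw [Finset.sum_congr rfl (fun l _ => this l)]
    rw [add_pow]
    rw [← Fin.sum_univ_eq_sum_range (fun k => t a ^ k * t b ^ (m - k) * ((Nat.choose m k : ℕ) : ZMod p)) (m+1)]
    apply Fintype.sum_equiv Fin.revPerm
    intro l
    simp only [Fin.revPerm_apply]
    have hl := l.isLt
    have h1 : ((Fin.rev l : Fin (m+1)) : ℕ) = m - (l:ℕ) := by rw [Fin.val_rev]; omega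
    rw [Fin.rev_rev, h1]
    ring
  -- E * F = 1 and F * E = 1
  have hrevval : ∀ k : Fin (m+1), ((Fin.rev k : Fin (m+1)) : ℕ) = m - (k:ℕ) := by
    intro k; rw [Fin.val_rev]; have := k.isLt; omega
  have hEF : E * F = 1 := by
    ext k l
    rw [Matrix.mul_apply]
    simp only [hE, hF, of_apply]
    simp only [hcond]
    have hkm : (k:ℕ) ≤ m := by have := k.isLt; omega
    rw [Finset.sum_eq_single (Fin.rev k)]
    · rw [if_pos rfl, Fin.rev_rev, hrevval, Nat.choose_symm hkm, Matrix.one_apply]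
      by_cases hkl : l = k
      · rw [if_pos hkl, if_pos hkl.symm]
        exact mul_inv_cancel₀ (hchoose' _ hkm)
      · rw [if_neg hkl, if_neg (fun h => hkl h.symm), mul_zero]
    · intro j _ hj
      rw [if_neg hj, zero_mul]
    · intro h
      exact absurd (Finset.mem_univ _) h
  have hFE : F * E = 1 := by
    ext k l
    rw [Matrix.mul_apply]
    simp only [hE, hF, of_apply]
    simp only [hcond]
    have hkm : (k:ℕ) ≤ m := by have := k.isLt; omega
    rw [Finset.sum_eq_single (Fin.rev k)]
    · rw [if_pos rfl, Fin.rev_rev, hrevval, Nat.choose_symm hkm, Matrix.one_apply]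
      by_cases hkl : l = k
      · rw [if_pos hkl, if_pos hkl.symm]
        exact inv_mul_cancel₀ (hchoose' _ hkm)
      · rw [if_neg hkl, if_neg (fun h => hkl h.symm), mul_zero]
    · intro j _ hj
      rw [if_neg hj, zero_mul]
    · intro h
      exact absurd (Finset.mem_univ _) h
  -- det V ≠ 0
  have hdetV : V.det ≠ 0 := by
    rw [hV, Matrix.det_vandermonde]
    apply Finset.prod_ne_zero_iff.mpr
    intro i _
    apply Finset.prod_ne_zero_iff.mpr
    intro j hj
    rw [Finset.mem_Ioi] at hj
    exact sub_ne_zero_of_ne (fun h => (ne_of_gt hj) (htinj h))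
  -- geometric sums
  have hmp : (m + 1) < p := by omega
  have hn0 : (((m+1 : ℕ)) : ZMod p) ≠ 0 := cast_ne_zero_of_lt' (by omega) hmp
  have hgeom : ∀ a : Fin (m+1), (∑ k : Fin (m+1), t a ^ (k:ℕ))
      = if a = 0 then (((m+1:ℕ)) : ZMod p) else 0 := by
    intro a
    rw [Fin.sum_univ_eq_sum_range (fun k => t a ^ k) (m+1)]
    by_cases ha : a = 0
    · rw [if_pos ha, ha, ht0]
      simp
    · rw [if_neg ha]
      have h1 : t a - 1 ≠ 0 := sub_ne_zero_of_ne (htne a ha)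
      have h2 := geom_sum_mul (t a) (m+1)
      rw [htpow a, sub_self] at h2
      rcases mul_eq_zero.mp h2 with h | h
      · exact h
      · exact absurd h h1
  -- column of adjugate V
  have hVunit : IsUnit V.det := isUnit_iff_ne_zero.mpr hdetV
  have : Invertible V := V.invertibleOfIsUnitDet hVunit
  have hadjV : ∀ k : Fin (m+1), V.adjugate k 0 = V.det * (((m+1:ℕ)) : ZMod p)⁻¹ := by
    have h1 : V *ᵥ (fun k => V.adjugate k 0)
        = V *ᵥ (fun _ => V.det * (((m+1:ℕ)) : ZMod p)⁻¹) := by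
      funext a
      have hL : (V *ᵥ (fun k => V.adjugate k 0)) a = (V * V.adjugate) a 0 := by
        rw [Matrix.mul_apply, Matrix.mulVec]
        rfl
      rw [hL, Matrix.mul_adjugate]
      have hR : (V *ᵥ (fun _ => V.det * (((m+1:ℕ)) : ZMod p)⁻¹)) a
          = (∑ k : Fin (m+1), t a ^ (k:ℕ)) * (V.det * (((m+1:ℕ)) : ZMod p)⁻¹) := by
        rw [Matrix.mulVec, Finset.sum_mul]
        rfl
      rw [hR, hgeom a]
      by_cases ha : a = 0
      · rw [if_pos ha, ha]
        rw [Matrix.smul_apply, Matrix.one_apply_eq, smul_eq_mul, mul_one,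
          mul_comm (((m+1:ℕ)) : ZMod p), mul_assoc, inv_mul_cancel₀ hn0, mul_one]
      · rw [if_neg ha, zero_mul, Matrix.smul_apply, Matrix.one_apply_ne ha, smul_zero]
    have h2 := Matrix.mulVec_injective_of_invertible V h1
    intro k
    exact congrFun h2 k
  -- adjugate E = det E • F
  have hadjE : E.adjugate = E.det • F := by
    calc E.adjugate = (F * E) * E.adjugate := by rw [hFE, Matrix.one_mul]
    _ = F * (E * E.adjugate) := by rw [Matrix.mul_assoc]
    _ = F * (E.det • 1) := by rw [Matrix.mul_adjugate]
    _ = E.det • (F * 1) := by rw [Matrix.mul_smul]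
    _ = E.det • F := by rw [Matrix.mul_one]
  have hdetE : E.det ≠ 0 := by
    intro h
    have := congrArg Matrix.det hEF
    rw [Matrix.det_mul, Matrix.det_one, h, zero_mul] at this
    exact zero_ne_one this
  -- minor = adjugate A 0 0
  have hminor : (Matrix.of fun i j : Fin m => (t i.succ + t j.succ) ^ m).det
      = A.adjugate 0 0 := by
    have hsub : ((A.updateRow 0 (Pi.single 0 1)).submatrix Fin.succ Fin.succ)
        = (Matrix.of fun i j : Fin m => (t i.succ + t j.succ) ^ m) := by
      ext i j
      rw [Matrix.submatrix_apply, Matrix.updateRow_ne (Fin.succ_ne_zero i)]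
      simp only [hA, of_apply]
    rw [Matrix.adjugate_apply, Matrix.det_succ_row_zero, Finset.sum_eq_single 0]
    · rw [Matrix.updateRow_self, Fin.succAbove_zero, hsub]
      simp
    · intro j _ hj
      rw [Matrix.updateRow_self, Pi.single_eq_of_ne hj, mul_zero, zero_mul]
    · intro h
      exact absurd (Finset.mem_univ 0) h
  -- compute adjugate A 0 0
  have hadjA : A.adjugate 0 0 = (V.det * (((m+1:ℕ)) : ZMod p)⁻¹)^2 * E.det *
      (∑ k ∈ range (m+1), (((Nat.choose m k : ℕ) : ZMod p))⁻¹) := by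
    rw [hAVEV, Matrix.adjugate_mul_distrib, Matrix.adjugate_mul_distrib]
    rw [← Matrix.adjugate_transpose, hadjE]
    rw [Matrix.mul_apply]
    have hterm : ∀ k : Fin (m+1), (Matrix.transpose V.adjugate) 0 k *
        ((E.det • F) * V.adjugate) k 0
        = (V.det * (((m+1:ℕ)) : ZMod p)⁻¹)^2 * E.det * (((Nat.choose m (k:ℕ) : ℕ) : ZMod p))⁻¹ := by
      intro k
      rw [Matrix.transpose_apply, hadjV k, Matrix.mul_apply]
      have hin : ∀ l : Fin (m+1), (E.det • F) k l * V.adjugate l 0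
          = E.det * (if l = Fin.rev k then (((Nat.choose m (k:ℕ) : ℕ) : ZMod p))⁻¹ else 0)
            * (V.det * (((m+1:ℕ)) : ZMod p)⁻¹) := by
        intro l
        rw [Matrix.smul_apply, hadjV l, hF]
        simp only [of_apply, hcond, smul_eq_mul]
        try ring
      rw [Finset.sum_congr rfl (fun l _ => hin l)]
      rw [show (∑ l : Fin (m+1), E.det * (if l = Fin.rev k then (((Nat.choose m (k:ℕ) : ℕ) : ZMod p))⁻¹ else 0)
            * (V.det * (((m+1:ℕ)) : ZMod p)⁻¹))
          = E.det * (V.det * (((m+1:ℕ)) : ZMod p)⁻¹) * (∑ l : Fin (m+1),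
            (if l = Fin.rev k then (((Nat.choose m (k:ℕ) : ℕ) : ZMod p))⁻¹ else 0)) from by
        rw [Finset.mul_sum]
        apply Finset.sum_congr rfl
        intro l _
        ring]
      rw [Finset.sum_ite_eq' univ (Fin.rev k)]
      simp only [Finset.mem_univ, if_true]
      ring
    rw [Finset.sum_congr rfl (fun k _ => hterm k)]
    rw [← Finset.mul_sum]
    rw [Fin.sum_univ_eq_sum_range (fun k => (((Nat.choose m k : ℕ) : ZMod p))⁻¹) (m+1)]
  -- conclude
  rw [hminor, hadjA]
  constructor
  · intro h
    rcases mul_eq_zero.mp h with h' | h'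
    · exfalso
      rcases mul_eq_zero.mp h' with h'' | h''
      · exact (pow_ne_zero 2 (mul_ne_zero hdetV (inv_ne_zero hn0))) h''
      · exact hdetE h''
    · exact h'
  · intro h
    rw [h, mul_zero]


theorem B_p_n_sub_one_singular_iff (p n : ℕ) [hp : Fact p.Prime] (hpn : p = 2 * n + 1)
    (h7 : 7 ≤ p)
    (s : Fin (n - 1) → ZMod p) (hinj : Function.Injective s)
    (hrange : ∀ x : ZMod p, (∃ i, s i = x) ↔ (IsSquare x ∧ x ≠ 0 ∧ x ≠ 1)) :
    (Matrix.of fun i j : Fin (n - 1) => (s i + s j) ^ (n - 1)).det = 0 ↔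
      (pellQ p : ℤ) ≡ 2 [ZMOD (p : ℤ) ^ 2] := by
  have hn3 : 3 ≤ n := by omega
  have hsprop : ∀ i, IsSquare (s i) ∧ s i ≠ 0 ∧ s i ≠ 1 := fun i => (hrange (s i)).mp ⟨i, rfl⟩
  have hmn : (n - 1) + 1 = n := by omega
  set t : Fin ((n - 1)+1) → ZMod p := Fin.cases 1 s with htdef
  have ht0 : t 0 = 1 := rfl
  have htsucc : ∀ i, t i.succ = s i := fun i => by simp [htdef]
  have htinj : Function.Injective t := by
    intro a b hab
    induction a using Fin.cases with
    | zero =>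
      induction b using Fin.cases with
      | zero => rfl
      | succ j =>
        rw [ht0, htsucc] at hab
        exact absurd hab.symm (hsprop j).2.2
    | succ i =>
      induction b using Fin.cases with
      | zero =>
        rw [ht0, htsucc] at hab
        exact absurd hab (hsprop i).2.2
      | succ j =>
        rw [htsucc, htsucc] at hab
        rw [hinj hab]
  have htpow : ∀ a, (t a)^((n - 1)+1) = 1 := by
    intro a
    induction a using Fin.cases with
    | zero => rw [ht0, one_pow]
    | succ i =>
      rw [htsucc]
      obtain ⟨y, hy⟩ := (hsprop i).1
      have hy0 : y ≠ 0 := by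
        intro h
        apply (hsprop i).2.1
        rw [hy, h, mul_zero]
      have : s i ^ ((n - 1)+1) = y ^ (2*((n - 1)+1)) := by
        rw [hy, ← pow_two y, ← pow_mul]
      rw [this, show 2*((n - 1)+1) = p - 1 by omega]
      exact ZMod.pow_card_sub_one_eq_one hy0
  have htne : ∀ a : Fin ((n - 1)+1), a ≠ 0 → t a ≠ 1 := by
    intro a ha
    induction a using Fin.cases with
    | zero => exact absurd rfl ha
    | succ i =>
      rw [htsucc]
      exact (hsprop i).2.2
  have hMeq : (Matrix.of fun i j : Fin (n - 1) => (s i + s j) ^ (n - 1))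
      = (Matrix.of fun i j : Fin (n - 1) => (t i.succ + t j.succ) ^ (n - 1)) := by
    ext i j
    rw [Matrix.of_apply, Matrix.of_apply, htsucc, htsucc]
  rw [hMeq, det_key p (n - 1) (by omega) (by omega) t ht0 htinj htpow htne]
  -- Step C : sum of inverse binomials equals (n/2^n) * S
  have hfm : ((Nat.factorial (n - 1) : ℕ) : ZMod p) ≠ 0 := fact_cast_ne_zero (by omega)
  have hcsum : (∑ k ∈ range ((n - 1)+1), (((Nat.choose (n - 1) k : ℕ) : ZMod p))⁻¹)
      = ((auxA (n - 1) : ℕ) : ZMod p) * ((Nat.factorial (n - 1) : ℕ) : ZMod p)⁻¹ := by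
    rw [auxA, Nat.cast_sum, Finset.sum_mul]
    apply Finset.sum_congr rfl
    intro k hk
    rw [Finset.mem_range] at hk
    have hkm : k ≤ (n - 1) := by omega
    have hC : ((Nat.choose (n - 1) k : ℕ) : ZMod p) ≠ 0 := by
      rw [Ne, ZMod.natCast_eq_zero_iff]
      intro hdvd
      have h1 : p ∣ Nat.factorial (n - 1) := by
        have : p ∣ Nat.choose (n - 1) k * Nat.factorial k * Nat.factorial ((n - 1) - k) :=
          Dvd.dvd.mul_right (Dvd.dvd.mul_right hdvd _) _
        rwa [Nat.choose_mul_factorial_mul_factorial hkm] at this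
      have := (Nat.Prime.dvd_factorial hp.out).mp h1
      omega
    have hid : ((Nat.choose (n - 1) k : ℕ) : ZMod p) * ((Nat.factorial k : ℕ) : ZMod p) * ((Nat.factorial ((n - 1)-k) : ℕ) : ZMod p)
        = ((Nat.factorial (n - 1) : ℕ) : ZMod p) := by
      have := congrArg (fun x : ℕ => (x : ZMod p)) (Nat.choose_mul_factorial_mul_factorial hkm)
      push_cast at this ⊢
      linear_combination this
    push_cast
    field_simp
    linear_combination -hid
  have hFeq := F_eq p (n - 1) (by omega)
  rw [hcsum, hFeq]
  have h2 : (2 : ZMod p) ≠ 0 := by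
    have : ((2:ℕ) : ZMod p) ≠ 0 := cast_ne_zero_of_lt (by norm_num) (by omega)
    simpa using this
  have hm1 : (((n - 1 : ℕ) : ZMod p) + 1) ≠ 0 := by
    have h := cast_ne_zero_of_lt (a := (n-1)+1) (p := p) (by omega) (by omega)
    rwa [Nat.cast_add, Nat.cast_one] at h
  have hpow : ((2:ZMod p)^n)⁻¹ ≠ 0 := inv_ne_zero (pow_ne_zero _ h2)
  rw [pell_cond p n hpn h7, hmn]
  constructor
  · intro h
    rcases mul_eq_zero.mp h with h' | h'
    · exfalso
      rcases mul_eq_zero.mp h' with h'' | h''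
      · exact hm1 h''
      · exact hpow h''
    · exact h'
  · intro h
    rw [h, mul_zero]
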